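/- arXiv:1306.6031 — 3 statements merged into one kernel-verified Lean document; each statement's English description precedes it below -/
import Mathlib

section
/- Let $A \in \mathbb{Z}^{m \times n}$, $b \in \mathbb{Z}^m$, $\lambda \in \mathbb{Q}^m_{\geq 0}$ with $\lambda^T A \in \mathbb{Z}^n$, $x^* \in \mathbb{R}^n$ with $Ax^* \le b$ and $\lambda^T(b - Ax^*) = 0$, and let $t$ be a positive integer. Then $(t\lambda \bmod 1)^T A \in \mathbb{Z}^n$, and if $\{t \lambda^T b\} > 0$ then the iterated CG-cut $((t\lambda \bmod 1)^T A)x \le \lfloor (t\lambda \bmod 1)^T b \rfloor$ is violated by $x^*$. -/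
/-- Iterated CG-cuts: `t·λ mod 1` again gives integral left-hand side, and if the
rounding effect is positive the iterated cut is violated by `x*`. -/
theorem iterated_cg_cut (m n : ℕ) (A : Matrix (Fin m) (Fin n) ℤ) (b : Fin m → ℤ)
    (lam : Fin m → ℚ) (hlam : ∀ i, 0 ≤ lam i)
    (hint : ∀ j : Fin n, ∃ k : ℤ, ∑ i, lam i * (A i j : ℚ) = (k : ℚ))
    (xs : Fin n → ℝ) (hxs : ∀ i, ∑ j, (A i j : ℝ) * xs j ≤ (b i : ℝ))
    (htight : ∑ i, (lam i : ℝ) * ((b i : ℝ) - ∑ j, (A i j : ℝ) * xs j) = 0)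
    (t : ℤ) (ht : 0 < t) :
    (∀ j : Fin n, ∃ k : ℤ, ∑ i, Int.fract ((t : ℚ) * lam i) * (A i j : ℚ) = (k : ℚ)) ∧
    (Int.fract ((t : ℚ) * ∑ i, lam i * (b i : ℚ)) > 0 →
      ∑ j, (∑ i, (Int.fract ((t : ℚ) * lam i) : ℝ) * (A i j : ℝ)) * xs j >
        (⌊∑ i, Int.fract ((t : ℚ) * lam i) * (b i : ℚ)⌋ : ℝ)) := by
  have hfr : ∀ i, Int.fract ((t:ℚ) * lam i) = (t:ℚ) * lam i - (⌊(t:ℚ) * lam i⌋ : ℚ) := by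
    intro i; rw [Int.fract]
  constructor
  · intro j
    obtain ⟨k, hk⟩ := hint j
    refine ⟨t * k - ∑ i, ⌊(t:ℚ) * lam i⌋ * A i j, ?_⟩
    have : ∑ i, Int.fract ((t:ℚ) * lam i) * (A i j : ℚ)
        = (t:ℚ) * ∑ i, lam i * (A i j : ℚ)
          - ∑ i, (⌊(t:ℚ) * lam i⌋ : ℚ) * (A i j : ℚ) := by
      rw [Finset.mul_sum, ← Finset.sum_sub_distrib]
      exact Finset.sum_congr rfl fun i _ => by rw [hfr i]; ring
    rw [this, hk]
    push_cast
    ring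
  · intro hpos
    -- each slack term vanishes against lam
    have hterm : ∀ i ∈ Finset.univ, (0:ℝ) ≤ (lam i : ℝ) * ((b i : ℝ) - ∑ j, (A i j : ℝ) * xs j) :=
      fun i _ => mul_nonneg (by exact_mod_cast hlam i) (by linarith [hxs i])
    have hzero := (Finset.sum_eq_zero_iff_of_nonneg hterm).mp htight
    have hmu : ∀ i, (Int.fract ((t:ℚ) * lam i) : ℝ) * ((b i : ℝ) - ∑ j, (A i j : ℝ) * xs j) = 0 := by
      intro i
      rcases eq_or_lt_of_le (hlam i) with h | h
      · simp [← h]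
      · have hl : (lam i : ℝ) ≠ 0 := by exact_mod_cast h.ne'
        have := hzero i (Finset.mem_univ i)
        have hs : (b i : ℝ) - ∑ j, (A i j : ℝ) * xs j = 0 := by
          rcases mul_eq_zero.mp this with h' | h'
          · exact absurd h' hl
          · exact h'
        rw [hs, mul_zero]
    -- LHS equals μᵀ b as reals
    have hlhs : ∑ j, (∑ i, (Int.fract ((t:ℚ) * lam i) : ℝ) * (A i j : ℝ)) * xs j
        = ∑ i, (Int.fract ((t:ℚ) * lam i) : ℝ) * (b i : ℝ) := by
      have : ∑ j, (∑ i, (Int.fract ((t:ℚ) * lam i) : ℝ) * (A i j : ℝ)) * xs j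
          = ∑ i, (Int.fract ((t:ℚ) * lam i) : ℝ) * ∑ j, (A i j : ℝ) * xs j := by
        simp_rw [Finset.sum_mul, Finset.mul_sum]
        rw [Finset.sum_comm]
        exact Finset.sum_congr rfl fun i _ => Finset.sum_congr rfl fun j _ => by ring
      rw [this]
      refine Finset.sum_congr rfl fun i _ => ?_
      have := hmu i
      nlinarith [hmu i]
    -- fract of μᵀ b is positive
    have hq : Int.fract (∑ i, Int.fract ((t:ℚ) * lam i) * (b i : ℚ))
        = Int.fract ((t:ℚ) * ∑ i, lam i * (b i : ℚ)) := by
      have h1 : ∑ i, Int.fract ((t:ℚ) * lam i) * (b i : ℚ)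
          = (t:ℚ) * ∑ i, lam i * (b i : ℚ) - (∑ i, ⌊(t:ℚ) * lam i⌋ * b i : ℤ) := by
        push_cast
        rw [Finset.mul_sum, ← Finset.sum_sub_distrib]
        exact Finset.sum_congr rfl fun i _ => by rw [hfr i]; ring
      rw [h1, Int.fract_sub_intCast]
    have hqpos : (0:ℚ) < Int.fract (∑ i, Int.fract ((t:ℚ) * lam i) * (b i : ℚ)) := by
      rw [hq]; exact hpos
    have hgt : (⌊∑ i, Int.fract ((t:ℚ) * lam i) * (b i : ℚ)⌋ : ℚ)
        < ∑ i, Int.fract ((t:ℚ) * lam i) * (b i : ℚ) := by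
      rw [Int.fract] at hqpos
      linarith
    rw [hlhs]
    have : ((∑ i, Int.fract ((t:ℚ) * lam i) * (b i : ℚ) : ℚ) : ℝ)
        = ∑ i, (Int.fract ((t:ℚ) * lam i) : ℝ) * (b i : ℝ) := by push_cast [Rat.cast_fract]; ring
    rw [← this]
    exact_mod_cast hgt
end

section
/- Let $a \in \mathbb{Z}^{d+1}$ have positive coprime entries with $a_{d+1} = \max_i a_i$, let $\Lambda_a = \{x \in \mathbb{Z}^{d+1} : x^T a = 0\}$ and $M_a = \pi_{d+1}(\Lambda_a)$. Then $\lambda_1(\Lambda_a) \leq \sqrt{d+1} \cdot \lambda_1(M_a)$, where $\lambda_1$ denotes the first successive minimum (the length of a shortest nonzero lattice vector) with respect to the Euclidean norm. -/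
/-- The first successive minimum (length of a shortest nonzero vector) of a
subset of `ℝ^n` (Euclidean norm). -/
noncomputable def firstMin (n : ℕ) (L : Set (EuclideanSpace ℝ (Fin n))) : ℝ :=
  sInf {r : ℝ | ∃ x ∈ L, x ≠ 0 ∧ ‖x‖ = r}

/-- `λ₁(Λ_a) ≤ √(d+1) · λ₁(M_a)` where `M_a` is the projection of `Λ_a` onto the
first `d` coordinates and `a_{d+1} = max_i a_i`. -/
theorem firstMin_orth_le (d : ℕ) (a : Fin (d + 1) → ℤ)
    (hpos : ∀ i, 0 < a i) (hgcd : Finset.univ.gcd a = 1)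
    (hmax : ∀ i, a i ≤ a (Fin.last d)) :
    firstMin (d + 1) {x : EuclideanSpace ℝ (Fin (d + 1)) |
        ∃ v : Fin (d + 1) → ℤ, (∑ i, v i * a i = 0) ∧ ∀ i, x i = (v i : ℝ)}
      ≤ Real.sqrt (d + 1) *
        firstMin d {y : EuclideanSpace ℝ (Fin d) |
          ∃ v : Fin (d + 1) → ℤ, (∑ i, v i * a i = 0) ∧ ∀ i : Fin d, y i = (v i.castSucc : ℝ)} := by
  classical
  set c : ℝ := Real.sqrt (d + 1) with hc
  have hcpos : 0 < c := Real.sqrt_pos.mpr (by positivity)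
  unfold firstMin
  set L : Set ℝ := {r : ℝ | ∃ x ∈ {x : EuclideanSpace ℝ (Fin (d + 1)) |
      ∃ v : Fin (d + 1) → ℤ, (∑ i, v i * a i = 0) ∧ ∀ i, x i = (v i : ℝ)}, x ≠ 0 ∧ ‖x‖ = r}
    with hL
  set R : Set ℝ := {r : ℝ | ∃ y ∈ {y : EuclideanSpace ℝ (Fin d) |
      ∃ v : Fin (d + 1) → ℤ, (∑ i, v i * a i = 0) ∧ ∀ i : Fin d, y i = (v i.castSucc : ℝ)},
      y ≠ 0 ∧ ‖y‖ = r} with hR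
  have hLbdd : BddBelow L := by
    refine ⟨0, fun b hb => ?_⟩
    obtain ⟨x, -, -, rfl⟩ := hb
    exact norm_nonneg _
  have hkey : ∀ r ∈ R, sInf L ≤ c * r := by
    rintro r ⟨y, ⟨v, hsum, hyv⟩, hy0, rfl⟩
    -- the lifted vector
    set x : EuclideanSpace ℝ (Fin (d + 1)) := WithLp.toLp 2 (fun i => (v i : ℝ)) with hx
    have hxmem : x ∈ {x : EuclideanSpace ℝ (Fin (d + 1)) |
        ∃ v : Fin (d + 1) → ℤ, (∑ i, v i * a i = 0) ∧ ∀ i, x i = (v i : ℝ)} :=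
      ⟨v, hsum, fun i => rfl⟩
    have hx0 : x ≠ 0 := by
      intro h0
      apply hy0
      ext i
      have : x i.castSucc = 0 := by rw [h0]; rfl
      rw [hyv i]
      simpa [hx] using this
    -- the integer bound on the last coordinate
    have hlast : |v (Fin.last d)| ≤ ∑ i : Fin d, |v i.castSucc| := by
      have hsum' : v (Fin.last d) * a (Fin.last d)
          = -∑ i : Fin d, v i.castSucc * a i.castSucc := by
        have := hsum
        rw [Fin.sum_univ_castSucc] at this
        linarith
      have h1 : |v (Fin.last d)| * a (Fin.last d)
          = |∑ i : Fin d, v i.castSucc * a i.castSucc| := by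
        rw [← abs_of_pos (hpos (Fin.last d)), ← abs_mul, hsum', abs_neg]
      have h2 : |∑ i : Fin d, v i.castSucc * a i.castSucc|
          ≤ (∑ i : Fin d, |v i.castSucc|) * a (Fin.last d) := by
        calc |∑ i : Fin d, v i.castSucc * a i.castSucc|
            ≤ ∑ i : Fin d, |v i.castSucc * a i.castSucc| := Finset.abs_sum_le_sum_abs _ _
          _ ≤ ∑ i : Fin d, |v i.castSucc| * a (Fin.last d) := by
              refine Finset.sum_le_sum fun i _ => ?_
              rw [abs_mul, abs_of_pos (hpos _)]
              exact mul_le_mul_of_nonneg_left (hmax _) (abs_nonneg _)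
          _ = (∑ i : Fin d, |v i.castSucc|) * a (Fin.last d) := by
              rw [Finset.sum_mul]
      exact le_of_mul_le_mul_right (h1 ▸ h2) (hpos _)
    -- the norm bound
    have hS : ‖y‖ ^ 2 = ∑ i : Fin d, ((v i.castSucc : ℝ)) ^ 2 := by
      rw [EuclideanSpace.norm_eq, Real.sq_sqrt (by positivity)]
      refine Finset.sum_congr rfl fun i _ => ?_
      rw [hyv i, Real.norm_eq_abs, sq_abs]
    have hlastR : ((v (Fin.last d) : ℝ)) ^ 2 ≤ d * ‖y‖ ^ 2 := by
      have h3 : ((v (Fin.last d) : ℝ)) ^ 2 ≤ (∑ i : Fin d, |(v i.castSucc : ℝ)|) ^ 2 := by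
        rw [← sq_abs]
        have hcast : |(v (Fin.last d) : ℝ)| ≤ ∑ i : Fin d, |(v i.castSucc : ℝ)| := by
          have := hlast
          push_cast
          exact_mod_cast this
        exact pow_le_pow_left₀ (abs_nonneg _) hcast 2
      have h4 : (∑ i : Fin d, |(v i.castSucc : ℝ)|) ^ 2
          ≤ (Finset.univ.card : ℝ) * ∑ i : Fin d, |(v i.castSucc : ℝ)| ^ 2 :=
        sq_sum_le_card_mul_sum_sq
      simp only [Finset.card_univ, Fintype.card_fin, sq_abs] at h4
      rw [hS]
      exact h3.trans h4
    have hnormx : ‖x‖ ≤ c * ‖y‖ := by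
      have hx2 : ∑ i : Fin (d + 1), ‖x i‖ ^ 2 ≤ ((d : ℝ) + 1) * ‖y‖ ^ 2 := by
        have heq : ∑ i : Fin (d + 1), ‖x i‖ ^ 2
            = (∑ i : Fin d, ((v i.castSucc : ℝ)) ^ 2) + ((v (Fin.last d) : ℝ)) ^ 2 := by
          rw [Fin.sum_univ_castSucc]
          congr 1
          · exact Finset.sum_congr rfl fun i _ => by rw [Real.norm_eq_abs, sq_abs]
          · rw [Real.norm_eq_abs, sq_abs]
        rw [heq, ← hS]
        nlinarith [hlastR, sq_nonneg ‖y‖]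
      calc ‖x‖ = Real.sqrt (∑ i : Fin (d + 1), ‖x i‖ ^ 2) := EuclideanSpace.norm_eq x
        _ ≤ Real.sqrt (((d : ℝ) + 1) * ‖y‖ ^ 2) := Real.sqrt_le_sqrt hx2
        _ = c * ‖y‖ := by
            rw [Real.sqrt_mul (by positivity), Real.sqrt_sq (norm_nonneg _), hc]
    exact (csInf_le hLbdd ⟨x, hxmem, hx0, rfl⟩).trans hnormx
  rcases Set.eq_empty_or_nonempty R with hRe | hRne
  · -- R empty forces L empty
    have hLe : L = ∅ := by
      rw [Set.eq_empty_iff_forall_notMem]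
      rintro r ⟨x, ⟨v, hsum, hxv⟩, hx0, rfl⟩
      set y : EuclideanSpace ℝ (Fin d) := WithLp.toLp 2 (fun i => (v i.castSucc : ℝ)) with hy
      have hymem : y ∈ {y : EuclideanSpace ℝ (Fin d) |
          ∃ v : Fin (d + 1) → ℤ, (∑ i, v i * a i = 0) ∧ ∀ i : Fin d, y i = (v i.castSucc : ℝ)} :=
        ⟨v, hsum, fun i => rfl⟩
      have hy0 : y = 0 := by
        by_contra hy0
        have : ‖y‖ ∈ R := ⟨y, hymem, hy0, rfl⟩
        rw [hRe] at this
        exact this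
      have hv0 : ∀ i : Fin d, v i.castSucc = 0 := by
        intro i
        have h0 : ((v i.castSucc : ℤ) : ℝ) = 0 := by
          have : y i = 0 := by rw [hy0]; rfl
          simpa [hy] using this
        exact_mod_cast h0
      have hvlast : v (Fin.last d) = 0 := by
        have h' := hsum
        rw [Fin.sum_univ_castSucc] at h'
        have : v (Fin.last d) * a (Fin.last d) = 0 := by
          have : ∑ i : Fin d, v i.castSucc * a i.castSucc = 0 :=
            Finset.sum_eq_zero fun i _ => by rw [hv0 i, zero_mul]
          linarith
        exact (mul_eq_zero.mp this).resolve_right (hpos _).ne'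
      apply hx0
      ext i
      rw [hxv i]
      refine Fin.lastCases ?_ ?_ i
      · rw [hvlast]; simp
      · intro j; rw [hv0 j]; simp
    rw [hLe, hRe, Real.sInf_empty, mul_zero]
  · -- R nonempty
    rw [← div_le_iff₀' hcpos]
    exact le_csInf hRne fun r hr => (div_le_iff₀' hcpos).mpr (hkey r hr)
end

section
/- Let $d \geq 2$, let $0 < R < 1/2$, and let $c(R) = (R, R, \ldots, R, 1-R) \in \mathbb{R}^d$. Define $r(x) = \|(x_1, \ldots, x_{d-1})\| / x_d$ for $x$ with $x_d > 0$, and let $a(d,R) = \frac{(1-R)((d-1)R^2 - 2R + 1)^{1/2} - (d-1)^{1/2} R^2}{dR^2 - 2R + 1}$ and $r(d,R) = (a(d,R)^{-2} - 1)^{1/2}$. Then $\max\{r(x) : x \in B^d(c(R), R)\} = r(d,R)$. -/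
/-- Euclidean norm of the first `d-1` coordinates of `x ∈ ℝ^d`. -/
noncomputable def projNorm (d : ℕ) (x : EuclideanSpace ℝ (Fin d)) : ℝ :=
  Real.sqrt (∑ i ∈ Finset.univ.filter (fun i : Fin d => (i : ℕ) < d - 1), (x i) ^ 2)

/-- The ratio `r(x) = ‖(x_1,…,x_{d-1})‖ / x_d`. -/
noncomputable def ratioFn (d : ℕ) (hd : 0 < d) (x : EuclideanSpace ℝ (Fin d)) : ℝ :=
  projNorm d x / x ⟨d - 1, Nat.sub_lt hd one_pos⟩

/-- The center `c(R) = (R,…,R,1-R)`. -/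
noncomputable def centerR (d : ℕ) (R : ℝ) : EuclideanSpace ℝ (Fin d) :=
  WithLp.toLp 2 (fun i : Fin d => if (i : ℕ) = d - 1 then 1 - R else R)

/-- The quantity `a(d,R)`. -/
noncomputable def aDR (d : ℕ) (R : ℝ) : ℝ :=
  ((1 - R) * Real.sqrt (((d : ℝ) - 1) * R ^ 2 - 2 * R + 1) - Real.sqrt ((d : ℝ) - 1) * R ^ 2) /
    ((d : ℝ) * R ^ 2 - 2 * R + 1)

/-- The quantity `r(d,R) = (a(d,R)⁻² - 1)^{1/2}`. -/
noncomputable def rDR (d : ℕ) (R : ℝ) : ℝ :=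
  Real.sqrt ((aDR d R) ⁻¹ ^ 2 - 1)

private lemma aux_lt_of_sq {a b : ℝ} (h : b ^ 2 < a ^ 2) (ha : 0 < a) (hb : 0 ≤ b) : b < a := by
  nlinarith

private lemma aux_le_of_sq {a b : ℝ} (h : a ^ 2 ≤ b ^ 2) (hb : 0 ≤ b) : a ≤ b := by
  nlinarith

private lemma aux_abs_bound {v t R : ℝ} (h : (v - t) ^ 2 ≤ R ^ 2) (hR : 0 ≤ R) : t - R ≤ v := by
  nlinarith [sq_nonneg (v - t + R)]

private lemma aux_cs2 {p q a b N R : ℝ} (hpq : p ^ 2 + q ^ 2 = N ^ 2)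
    (hab : a ^ 2 + b ^ 2 ≤ R ^ 2) (hN : 0 ≤ N) (hR : 0 ≤ R) :
    p * a - q * b ≤ N * R := by
  have h0 : N ^ 2 * (a ^ 2 + b ^ 2) ≤ N ^ 2 * R ^ 2 :=
    mul_le_mul_of_nonneg_left hab (sq_nonneg N)
  have h2 : (p ^ 2 + q ^ 2) * (a ^ 2 + b ^ 2) = N ^ 2 * (a ^ 2 + b ^ 2) := by rw [hpq]
  have h1 : (p * a - q * b) ^ 2 ≤ (N * R) ^ 2 := by
    nlinarith [sq_nonneg (p * b + q * a), h0, h2]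
  exact aux_le_of_sq h1 (mul_nonneg hN hR)

set_option maxHeartbeats 1000000 in
/-- Lemma 1 (isoperimetric lemma): the maximum of `r(x)` over the ball
`B(c(R), R)` equals `r(d,R)`. -/
theorem max_ratio_on_ball (d : ℕ) (hd : 2 ≤ d) (R : ℝ) (hR0 : 0 < R) (hR : R < 1 / 2) :
    IsGreatest {y : ℝ | ∃ x ∈ Metric.closedBall (centerR d R) R,
        y = ratioFn d (by omega) x} (rDR d R) := by
  have hd0 : 0 < d := by omega
  set idx : Fin d := ⟨d - 1, by omega⟩ with hidx
  have hidxval : (idx : ℕ) = d - 1 := by rw [hidx]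
  set D : ℝ := (d : ℝ) with hDdef
  have hD2 : (2 : ℝ) ≤ D := by rw [hDdef]; exact_mod_cast hd
  have hcast : ((d - 1 : ℕ) : ℝ) = D - 1 := by
    rw [hDdef]; push_cast [Nat.cast_sub (by omega : 1 ≤ d)]; ring
  have hc0 : (0 : ℝ) < Real.sqrt (D - 1) := Real.sqrt_pos.mpr (by linarith)
  have hcsq : Real.sqrt (D - 1) ^ 2 = D - 1 := Real.sq_sqrt (by linarith)
  have hQ2pos : 0 < (D - 1) * R ^ 2 - 2 * R + 1 := by nlinarith [sq_nonneg (1 - R), sq_nonneg R]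
  set Q : ℝ := Real.sqrt ((D - 1) * R ^ 2 - 2 * R + 1) with hQdef
  have hQpos : 0 < Q := Real.sqrt_pos.mpr hQ2pos
  have hQsq : Q ^ 2 = (D - 1) * R ^ 2 - 2 * R + 1 := Real.sq_sqrt hQ2pos.le
  set s : ℝ := Real.sqrt (D - 1) * R with hsdef
  have hssq : s ^ 2 = (D - 1) * R ^ 2 := by rw [hsdef, mul_pow, hcsq]
  have hs0 : 0 ≤ s := by rw [hsdef]; exact mul_nonneg hc0.le hR0.le
  set t : ℝ := 1 - R with htdef
  have ht0 : 0 < t := by rw [htdef]; linarith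
  set N : ℝ := D * R ^ 2 - 2 * R + 1 with hNdef
  have hNpos : 0 < N := by rw [hNdef]; nlinarith [sq_nonneg R]
  have hNeq : N = s ^ 2 + t ^ 2 := by rw [hNdef, hssq, htdef]; ring
  have hNeq2 : N = Q ^ 2 + R ^ 2 := by rw [hNdef, hQsq]; ring
  set p : ℝ := t * Q - s * R with hpdef
  set q : ℝ := s * Q + t * R with hqdef
  have hpqN : p ^ 2 + q ^ 2 = N ^ 2 := by
    have h : p ^ 2 + q ^ 2 = (s ^ 2 + t ^ 2) * (Q ^ 2 + R ^ 2) := by rw [hpdef, hqdef]; ring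
    rw [h, ← hNeq, ← hNeq2]; ring
  have hppos : 0 < p := by
    have hkey : t ^ 2 * Q ^ 2 - s ^ 2 * R ^ 2 = (1 - 2 * R) * N := by
      rw [hssq, hQsq, htdef, hNdef]; ring
    have h12R : 0 < 1 - 2 * R := by linarith
    rw [hpdef]
    have h13 : s * R < t * Q := by
      refine aux_lt_of_sq ?_ (mul_pos ht0 hQpos) (mul_nonneg hs0 hR0.le)
      have : (s * R) ^ 2 = s ^ 2 * R ^ 2 := by ring
      nlinarith [mul_pos h12R hNpos, hkey]
    linarith
  have hq0 : 0 ≤ q := by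
    rw [hqdef]; exact add_nonneg (mul_nonneg hs0 hQpos.le) (mul_nonneg ht0.le hR0.le)
  have hqleN : q ≤ N := by
    rw [← pow_le_pow_iff_left₀ hq0 hNpos.le two_ne_zero]
    linarith [sq_nonneg p, hpqN]
  have hst : p * s - q * t = -(N * R) := by rw [hpdef, hqdef, hNeq]; ring
  -- value of rDR
  have haDR : aDR d R = p / N := by
    unfold aDR
    rw [← hDdef, ← hQdef, ← hNdef]
    congr 1
    rw [hpdef, hsdef, htdef]; ring
  have hrDR : rDR d R = q / p := by
    unfold rDR
    rw [haDR, inv_div, div_pow]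
    have h : N ^ 2 / p ^ 2 - 1 = (q / p) ^ 2 := by
      rw [div_pow]
      field_simp
      linarith [hpqN]
    rw [h, Real.sqrt_sq (div_nonneg hq0 hppos.le)]
  -- the distance formula
  have hnotfilt : Finset.univ.filter (fun i : Fin d => ¬ (i : ℕ) < d - 1) = {idx} := by
    ext i
    have hi := i.isLt
    simp only [Finset.mem_filter, Finset.mem_univ, true_and, Finset.mem_singleton,
      Fin.ext_iff, hidxval]
    omega
  have hdist2 : ∀ x : EuclideanSpace ℝ (Fin d),
      dist x (centerR d R) ^ 2 =
        (∑ i ∈ Finset.univ.filter (fun i : Fin d => (i : ℕ) < d - 1), (x i - R) ^ 2)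
          + (x idx - t) ^ 2 := by
    intro x
    rw [EuclideanSpace.dist_eq, Real.sq_sqrt (by positivity)]
    rw [← Finset.sum_filter_add_sum_filter_not Finset.univ (fun i : Fin d => (i : ℕ) < d - 1)]
    congr 1
    · apply Finset.sum_congr rfl
      intro i hi
      rw [Finset.mem_filter] at hi
      rw [Real.dist_eq, sq_abs]
      simp only [centerR, WithLp.ofLp_toLp]
      rw [if_neg (by omega)]
    · rw [hnotfilt, Finset.sum_singleton, Real.dist_eq, sq_abs]
      simp only [centerR, WithLp.ofLp_toLp, hidxval, if_true, htdef]
  have hFcard : (Finset.univ.filter (fun i : Fin d => (i : ℕ) < d - 1)).card = d - 1 := by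
    have h : Finset.univ.filter (fun i : Fin d => (i : ℕ) < d - 1) = Finset.Iio idx := by
      ext i
      simp only [Finset.mem_filter, Finset.mem_univ, true_and, Finset.mem_Iio, Fin.lt_def,
        hidxval]
    rw [h, Fin.card_Iio, hidxval]
  constructor
  · -- membership: the maximizer
    set u' : ℝ := s + R * p / N with hu'def
    set v' : ℝ := t - R * q / N with hv'def
    have hu'0 : 0 ≤ u' := by
      have h1 : 0 < R * p / N := div_pos (mul_pos hR0 hppos) hNpos
      rw [hu'def]; linarith
    have hv'0 : 0 < v' := by
      have h1 : R * q / N ≤ R := by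
        rw [div_le_iff₀ hNpos]
        exact mul_le_mul_of_nonneg_left hqleN hR0.le
      rw [hv'def, htdef]; linarith
    have hus : u' - s = R * p / N := by rw [hu'def]; ring
    have hvt : v' - t = -(R * q / N) := by rw [hv'def]; ring
    set xs : EuclideanSpace ℝ (Fin d) :=
      WithLp.toLp 2 (fun i : Fin d => if (i : ℕ) = d - 1 then v' else u' / Real.sqrt (D - 1)) with hxs
    have hxsi : ∀ i : Fin d, xs i = if (i : ℕ) = d - 1 then v' else u' / Real.sqrt (D - 1) :=
      fun i => by simp only [hxs, WithLp.ofLp_toLp]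
    have hxsidx : xs idx = v' := by rw [hxsi idx, if_pos hidxval]
    have hsum1 : (∑ i ∈ Finset.univ.filter (fun i : Fin d => (i : ℕ) < d - 1), (xs i) ^ 2)
        = u' ^ 2 := by
      have hsc : (∑ i ∈ Finset.univ.filter (fun i : Fin d => (i : ℕ) < d - 1), (xs i) ^ 2)
          = ∑ _i ∈ Finset.univ.filter (fun i : Fin d => (i : ℕ) < d - 1),
              (u' / Real.sqrt (D - 1)) ^ 2 :=
        Finset.sum_congr rfl (fun i hi => by
          rw [Finset.mem_filter] at hi
          rw [hxsi i, if_neg (by omega)])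
      rw [hsc, Finset.sum_const, hFcard, nsmul_eq_mul, hcast, div_pow, hcsq]
      have hD1 : D - 1 ≠ 0 := by linarith
      field_simp
    have hproj : projNorm d xs = u' := by
      unfold projNorm
      rw [hsum1, Real.sqrt_sq hu'0]
    have hsum2 : (∑ i ∈ Finset.univ.filter (fun i : Fin d => (i : ℕ) < d - 1), (xs i - R) ^ 2)
        = (u' - s) ^ 2 := by
      have hsc2 : (∑ i ∈ Finset.univ.filter (fun i : Fin d => (i : ℕ) < d - 1), (xs i - R) ^ 2)
          = ∑ _i ∈ Finset.univ.filter (fun i : Fin d => (i : ℕ) < d - 1),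
              (u' / Real.sqrt (D - 1) - R) ^ 2 :=
        Finset.sum_congr rfl (fun i hi => by
          rw [Finset.mem_filter] at hi
          rw [hxsi i, if_neg (by omega)])
      rw [hsc2, Finset.sum_const, hFcard, nsmul_eq_mul, hcast]
      have h2 : u' - s = Real.sqrt (D - 1) * (u' / Real.sqrt (D - 1) - R) := by
        rw [hsdef]; field_simp
      rw [h2, mul_pow, hcsq]
    have hdxs : dist xs (centerR d R) ^ 2 = R ^ 2 := by
      rw [hdist2 xs, hsum2, hxsidx, hus, hvt]
      rw [neg_sq, div_pow, div_pow, ← add_div, mul_pow, mul_pow, ← mul_add, hpqN, mul_div_assoc,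
        div_self (pow_ne_zero 2 hNpos.ne'), mul_one]
    have hmem : xs ∈ Metric.closedBall (centerR d R) R := by
      rw [Metric.mem_closedBall]
      have h3 : dist xs (centerR d R) = R := by
        calc dist xs (centerR d R) = Real.sqrt (dist xs (centerR d R) ^ 2) :=
              (Real.sqrt_sq dist_nonneg).symm
          _ = Real.sqrt (R ^ 2) := by rw [hdxs]
          _ = R := Real.sqrt_sq hR0.le
      linarith [h3.le]
    refine ⟨xs, hmem, ?_⟩
    have hratio : ratioFn d (by omega) xs = u' / v' := by
      unfold ratioFn
      rw [hproj, hxsidx]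
    rw [hratio, hrDR]
    rw [div_eq_div_iff hppos.ne' hv'0.ne']
    have : p * u' - q * v' = 0 := by
      have h4 : N * (p * u' - q * v') = N * (p * s - q * t) + R * (p ^ 2 + q ^ 2) := by
        rw [hu'def, hv'def]; field_simp; ring
      have h5 : N * (p * u' - q * v') = 0 := by
        rw [h4, hst, hpqN]; ring
      have := mul_eq_zero.mp h5
      rcases this with h | h
      · exact absurd h (ne_of_gt hNpos)
      · exact h
    linarith
  · -- upper bound
    rintro y ⟨x, hx, rfl⟩
    rw [Metric.mem_closedBall] at hx
    have hxsq : dist x (centerR d R) ^ 2 ≤ R ^ 2 := by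
      have := pow_le_pow_left₀ dist_nonneg hx 2
      linarith
    set u : ℝ := projNorm d x with hudef
    set v : ℝ := x idx with hvdef
    have hu0 : 0 ≤ u := Real.sqrt_nonneg _
    have hu2 : u ^ 2 = ∑ i ∈ Finset.univ.filter (fun i : Fin d => (i : ℕ) < d - 1), (x i) ^ 2 := by
      rw [hudef]
      unfold projNorm
      exact Real.sq_sqrt (Finset.sum_nonneg fun i _ => sq_nonneg _)
    set T : ℝ := ∑ i ∈ Finset.univ.filter (fun i : Fin d => (i : ℕ) < d - 1), x i with hTdef
    have hT2 : T ^ 2 ≤ (D - 1) * u ^ 2 := by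
      have h1 := sq_sum_le_card_mul_sum_sq
        (s := Finset.univ.filter (fun i : Fin d => (i : ℕ) < d - 1)) (f := fun i => x i)
      rw [hFcard] at h1
      rw [hTdef, hu2]
      calc T ^ 2 ≤ ((d - 1 : ℕ) : ℝ) * ∑ i ∈ _, (x i) ^ 2 := by exact_mod_cast h1
        _ = (D - 1) * ∑ i ∈ _, (x i) ^ 2 := by rw [hcast]
    have hTle : T ≤ Real.sqrt (D - 1) * u := by
      calc T ≤ |T| := le_abs_self T
        _ = Real.sqrt (T ^ 2) := (Real.sqrt_sq_eq_abs T).symm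
        _ ≤ Real.sqrt ((D - 1) * u ^ 2) := Real.sqrt_le_sqrt hT2
        _ = Real.sqrt (D - 1) * u := by
            rw [Real.sqrt_mul (by linarith), Real.sqrt_sq hu0]
    have hSeq : (∑ i ∈ Finset.univ.filter (fun i : Fin d => (i : ℕ) < d - 1), (x i - R) ^ 2)
        = u ^ 2 - 2 * R * T + (D - 1) * R ^ 2 := by
      calc (∑ i ∈ Finset.univ.filter (fun i : Fin d => (i : ℕ) < d - 1), (x i - R) ^ 2)
          = ∑ i ∈ Finset.univ.filter (fun i : Fin d => (i : ℕ) < d - 1),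
              ((x i) ^ 2 - 2 * R * x i + R ^ 2) := by
            apply Finset.sum_congr rfl; intro i _; ring
        _ = (∑ i ∈ Finset.univ.filter (fun i : Fin d => (i : ℕ) < d - 1), (x i) ^ 2)
              - 2 * R * T
              + ((Finset.univ.filter (fun i : Fin d => (i : ℕ) < d - 1)).card : ℝ) * R ^ 2 := by
            rw [Finset.sum_add_distrib, Finset.sum_sub_distrib, Finset.sum_const,
              nsmul_eq_mul, hTdef, Finset.mul_sum]
        _ = u ^ 2 - 2 * R * T + (D - 1) * R ^ 2 := by rw [← hu2, hFcard, hcast]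
    have hSlow : (u - s) ^ 2 ≤
        ∑ i ∈ Finset.univ.filter (fun i : Fin d => (i : ℕ) < d - 1), (x i - R) ^ 2 := by
      rw [hSeq]
      have h6 : 2 * R * T ≤ 2 * R * (Real.sqrt (D - 1) * u) :=
        mul_le_mul_of_nonneg_left hTle (by linarith)
      have h7 : s * u = R * (Real.sqrt (D - 1) * u) := by rw [hsdef]; ring
      have e1 : (u - s) ^ 2 = u ^ 2 - 2 * (s * u) + s ^ 2 := by ring
      rw [e1, h7, hssq]
      linarith [h6]
    have hkey : (u - s) ^ 2 + (v - t) ^ 2 ≤ R ^ 2 := by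
      have h8 := hdist2 x
      rw [h8] at hxsq
      rw [hvdef]
      linarith [hSlow]
    have hv0 : 0 < v := by
      have h9 : (v - t) ^ 2 ≤ R ^ 2 := by linarith [sq_nonneg (u - s), hkey]
      have h10 := aux_abs_bound h9 hR0.le
      rw [htdef] at h10
      linarith
    have hCS : p * (u - s) - q * (v - t) ≤ N * R :=
      aux_cs2 hpqN hkey hNpos.le hR0.le
    have hpuqv : p * u ≤ q * v := by linarith [hst, hCS]
    have hratio : ratioFn d (by omega : 0 < d) x = u / v := by
      unfold ratioFn
      rw [← hudef]
    rw [hratio, hrDR, div_le_div_iff₀ hv0 hppos]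
    linarith [hpuqv]
end
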